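/- Let H be a real Hilbert space and F : H → ℝ differentiable with gradient ∇F satisfying: ⟨∇F(x) − ∇F(y), x − y⟩ ≥ μ‖x − y‖² for all x, y (μ-strong convexity) and ‖∇F(x) − ∇F(y)‖ ≤ L‖x − y‖ for all x, y, with 0 < μ ≤ L. Let z* ∈ H satisfy ∇F(z*) = 0. Let (Ω, 𝔉, P) be a probability space, 𝒢 ⊆ 𝔉 a sub-σ-algebra, z : Ω → H a 𝒢-measurable square-integrable random variable, and g : Ω → H a square-integrable random variable satisfying the norm condition E[‖g − ∇F(z)‖² | 𝒢] ≤ θ² ‖∇F(z)‖² P-a.s., with θ ≥ 0. Then for any step size α ∈ (0, 2/(μ + L)], P-almost surely: E[ ‖z − α g − z*‖² | 𝒢 ] ≤ (1 − αμ + αθL)² ‖z − z*‖². -/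

import Mathlib

open MeasureTheory
open scoped RealInnerProductSpace

section AuxLemmas

variable {H : Type*} [NormedAddCommGroup H] [InnerProductSpace ℝ H] [CompleteSpace H]

lemma hasDerivAt_line (f : H → ℝ) (Fg : H → H) (hf : ∀ x, HasGradientAt f (Fg x) x)
    (x v : H) (t : ℝ) :
    HasDerivAt (fun s : ℝ => f (x + s • v)) ⟪Fg (x + t • v), v⟫ t := by
  have h1 : HasFDerivAt f (InnerProductSpace.toDual ℝ H (Fg (x + t • v))) (x + t • v) :=
    (hf _).hasFDerivAt
  have h2 : HasDerivAt (fun s : ℝ => x + s • v) v t := by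
    simpa using ((hasDerivAt_id t).smul_const v).const_add x
  have h3 := h1.comp_hasDerivAt t h2
  exact h3

lemma grad_lower_bound (f : H → ℝ) (Fg : H → H) (hf : ∀ x, HasGradientAt f (Fg x) x)
    (hm : ∀ x y, 0 ≤ ⟪Fg x - Fg y, x - y⟫) (x y : H) :
    f x + ⟪Fg x, y - x⟫ ≤ f y := by
  set v := y - x with hv
  set ψ : ℝ → ℝ := fun s => f (x + s • v) - s * ⟪Fg x, v⟫ with hψ
  have hψd : ∀ t : ℝ, HasDerivAt ψ (⟪Fg (x + t • v), v⟫ - ⟪Fg x, v⟫) t := by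
    intro t
    have := (hasDerivAt_line f Fg hf x v t).sub ((hasDerivAt_id t).mul_const ⟪Fg x, v⟫)
    simp only [one_mul] at this
    exact this
  have hmono : MonotoneOn ψ (Set.Icc (0:ℝ) 1) := by
    apply monotoneOn_of_deriv_nonneg (convex_Icc 0 1)
    · exact (Continuous.continuousOn (by
        exact continuous_iff_continuousAt.2 fun t => (hψd t).continuousAt))
    · intro t _
      exact ((hψd t).differentiableAt).differentiableWithinAt
    · intro t ht
      rw [interior_Icc] at ht
      rw [(hψd t).deriv, sub_nonneg]
      have h0 := hm (x + t • v) x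
      have hsub : (x + t • v) - x = t • v := by abel
      rw [hsub, real_inner_smul_right] at h0
      have := (mul_nonneg_iff_of_pos_left ht.1).mp h0
      rw [inner_sub_left] at this
      linarith
  have h01 := hmono (Set.mem_Icc.2 ⟨le_refl 0, zero_le_one⟩)
    (Set.mem_Icc.2 ⟨zero_le_one, le_refl 1⟩) zero_le_one
  simp only [hψ, zero_smul, add_zero, zero_mul, sub_zero, one_smul, one_mul] at h01
  have hxy : x + v = y := by rw [hv]; abel
  rw [hxy] at h01
  linarith

lemma grad_descent (f : H → ℝ) (Fg : H → H) (hf : ∀ x, HasGradientAt f (Fg x) x)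
    (K : ℝ) (hub : ∀ x y, ⟪Fg x - Fg y, x - y⟫ ≤ K * ‖x - y‖ ^ 2) (x y : H) :
    f y ≤ f x + ⟪Fg x, y - x⟫ + K / 2 * ‖y - x‖ ^ 2 := by
  set v := y - x with hv
  set ψ : ℝ → ℝ := fun s => f (x + s • v) - s * ⟪Fg x, v⟫ - K / 2 * s ^ 2 * ‖v‖ ^ 2 with hψ
  have hψd : ∀ t : ℝ,
      HasDerivAt ψ (⟪Fg (x + t • v), v⟫ - ⟪Fg x, v⟫ - K / 2 * (2 * t) * ‖v‖ ^ 2) t := by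
    intro t
    have h1 := (hasDerivAt_line f Fg hf x v t).sub ((hasDerivAt_id t).mul_const ⟪Fg x, v⟫)
    have h2 : HasDerivAt (fun s : ℝ => K / 2 * s ^ 2 * ‖v‖ ^ 2) (K / 2 * (2 * t) * ‖v‖ ^ 2) t := by
      have h3 : HasDerivAt (fun s : ℝ => s ^ 2) (2 * t) t := by
        simpa using (hasDerivAt_pow 2 t)
      have := (h3.const_mul (K / 2)).mul_const (‖v‖ ^ 2)
      convert this using 1 <;> ring
    have h4 := h1.sub h2
    simp only [one_mul] at h4
    exact h4
  have hmono : AntitoneOn ψ (Set.Icc (0:ℝ) 1) := by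
    apply antitoneOn_of_deriv_nonpos (convex_Icc 0 1)
    · exact (Continuous.continuousOn (by
        exact continuous_iff_continuousAt.2 fun t => (hψd t).continuousAt))
    · intro t _
      exact ((hψd t).differentiableAt).differentiableWithinAt
    · intro t ht
      rw [interior_Icc] at ht
      rw [(hψd t).deriv]
      have h0 := hub (x + t • v) x
      have hsub : (x + t • v) - x = t • v := by abel
      rw [hsub, real_inner_smul_right, norm_smul, Real.norm_eq_abs,
        abs_of_pos ht.1, mul_pow] at h0
      rw [inner_sub_left] at h0
      have ht1 := ht.1
      nlinarith [h0]
  have h01 := hmono (Set.mem_Icc.2 ⟨le_refl 0, zero_le_one⟩)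
    (Set.mem_Icc.2 ⟨zero_le_one, le_refl 1⟩) zero_le_one
  simp only [hψ, zero_smul, add_zero, zero_mul, sub_zero, one_smul, one_mul, one_pow] at h01
  have hxy : x + v = y := by rw [hv]; abel
  rw [hxy] at h01
  linarith


lemma grad_cocoercive (f : H → ℝ) (Fg : H → H) (hf : ∀ x, HasGradientAt f (Fg x) x)
    (hm : ∀ x y, 0 ≤ ⟪Fg x - Fg y, x - y⟫) (K : ℝ) (hK : 0 < K)
    (hub : ∀ x y, ⟪Fg x - Fg y, x - y⟫ ≤ K * ‖x - y‖ ^ 2) (x y : H) :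
    ‖Fg x - Fg y‖ ^ 2 ≤ K * ⟪Fg x - Fg y, x - y⟫ := by
  -- one-sided improved lower bound
  have onesided : ∀ a b : H,
      2 * K * (f a + ⟪Fg a, b - a⟫) + ‖Fg b - Fg a‖ ^ 2 ≤ 2 * K * f b := by
    intro a b
    set h : H → ℝ := fun w => f w - ⟪Fg a, w⟫ with hh
    set hg : H → H := fun w => Fg w - Fg a with hhg
    have hgrad : ∀ w, HasGradientAt h (hg w) w := by
      intro w
      rw [hasGradientAt_iff_hasFDerivAt]
      have h1 := (hf w).hasFDerivAt
      have h2 : HasFDerivAt (fun w : H => ⟪Fg a, w⟫)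
          (InnerProductSpace.toDual ℝ H (Fg a)) w :=
        (InnerProductSpace.toDual ℝ H (Fg a)).hasFDerivAt
      have := h1.sub h2
      have e : InnerProductSpace.toDual ℝ H (hg w)
          = InnerProductSpace.toDual ℝ H (Fg w) - InnerProductSpace.toDual ℝ H (Fg a) := by
        rw [hhg, map_sub]
      rw [e]
      exact this
    have hm' : ∀ u w, 0 ≤ ⟪hg u - hg w, u - w⟫ := by
      intro u w
      have : hg u - hg w = Fg u - Fg w := by simp only [hhg]; abel
      rw [this]; exact hm u w
    have hub' : ∀ u w, ⟪hg u - hg w, u - w⟫ ≤ K * ‖u - w‖ ^ 2 := by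
      intro u w
      have : hg u - hg w = Fg u - Fg w := by simp only [hhg]; abel
      rw [this]; exact hub u w
    -- a minimizes h
    have hmin : ∀ w, h a ≤ h w := by
      intro w
      have := grad_lower_bound h hg hgrad hm' a w
      have hza : hg a = 0 := by rw [hhg]; simp
      rw [hza] at this
      simpa using this
    -- descent step from b
    set w := b - (K⁻¹) • (Fg b - Fg a) with hw
    have hdes := grad_descent h hg hgrad K hub' b w
    have hwb : w - b = -(K⁻¹ • (Fg b - Fg a)) := by rw [hw]; abel
    have hinner : ⟪hg b, w - b⟫ = -(K⁻¹ * ‖Fg b - Fg a‖ ^ 2) := by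
      rw [hwb, inner_neg_right, real_inner_smul_right, hhg]
      rw [real_inner_self_eq_norm_sq]
    have hnorm : ‖w - b‖ ^ 2 = K⁻¹ ^ 2 * ‖Fg b - Fg a‖ ^ 2 := by
      rw [hwb, norm_neg, norm_smul, Real.norm_eq_abs, abs_of_pos (inv_pos.2 hK), mul_pow]
    rw [hinner, hnorm] at hdes
    have hcomb := le_trans (hmin w) hdes
    rw [hh] at hcomb
    simp only at hcomb
    have hKne : K ≠ 0 := ne_of_gt hK
    have h2K : (0:ℝ) < 2 * K := by linarith
    have hstep : f a - ⟪Fg a, a⟫ ≤ f b - ⟪Fg a, b⟫ - ‖Fg b - Fg a‖ ^ 2 / (2 * K) := by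
      have heq : f b - ⟪Fg a, b⟫ + -(K⁻¹ * ‖Fg b - Fg a‖ ^ 2)
          + K / 2 * (K⁻¹ ^ 2 * ‖Fg b - Fg a‖ ^ 2)
          = f b - ⟪Fg a, b⟫ - ‖Fg b - Fg a‖ ^ 2 / (2 * K) := by
        field_simp
        ring
      rw [← heq]
      exact hcomb
    have hmul := mul_le_mul_of_nonneg_left hstep h2K.le
    have hcan : 2 * K * (‖Fg b - Fg a‖ ^ 2 / (2 * K)) = ‖Fg b - Fg a‖ ^ 2 :=
      mul_div_cancel₀ _ (ne_of_gt h2K)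
    have h5 : ⟪Fg a, b - a⟫ = ⟪Fg a, b⟫ - ⟪Fg a, a⟫ := inner_sub_right _ _ _
    rw [h5]
    nlinarith [hmul, hcan]
  have hA := onesided x y
  have hB := onesided y x
  have hrev : ‖Fg x - Fg y‖ = ‖Fg y - Fg x‖ := norm_sub_rev _ _
  rw [inner_sub_left]
  have h1 : ⟪Fg x, y - x⟫ = ⟪Fg x, y⟫ - ⟪Fg x, x⟫ := inner_sub_right _ _ _
  have h2 : ⟪Fg y, x - y⟫ = ⟪Fg y, x⟫ - ⟪Fg y, y⟫ := inner_sub_right _ _ _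
  have h3 : ⟪Fg x, x - y⟫ = ⟪Fg x, x⟫ - ⟪Fg x, y⟫ := inner_sub_right _ _ _
  rw [h1] at hA
  rw [h2, hrev] at hB
  rw [h3, h2, hrev]
  nlinarith [hA, hB]

lemma grad_interp (f : H → ℝ) (Fg : H → H) (hf : ∀ x, HasGradientAt f (Fg x) x)
    (μc L : ℝ) (hμc : 0 < μc) (hμL : μc ≤ L)
    (hsc : ∀ x y : H, μc * ‖x - y‖ ^ 2 ≤ ⟪Fg x - Fg y, x - y⟫)
    (hlip : ∀ x y : H, ‖Fg x - Fg y‖ ≤ L * ‖x - y‖) (x y : H) :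
    μc * L * ‖x - y‖ ^ 2 + ‖Fg x - Fg y‖ ^ 2 ≤ (μc + L) * ⟪Fg x - Fg y, x - y⟫ := by
  rcases eq_or_lt_of_le hμL with heq | hlt
  · -- μc = L
    subst heq
    have h1 := hsc x y
    have h2 := hlip x y
    have h3 : ‖Fg x - Fg y‖ ^ 2 ≤ μc ^ 2 * ‖x - y‖ ^ 2 := by
      nlinarith [norm_nonneg (Fg x - Fg y), norm_nonneg (x - y), mul_nonneg hμc.le (norm_nonneg (x - y))]
    nlinarith [h1, h3, mul_nonneg hμc.le (sq_nonneg ‖x - y‖)]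
  · -- μc < L
    set G : H → ℝ := fun w => f w - μc / 2 * ‖w‖ ^ 2 with hG
    set Gg : H → H := fun w => Fg w - μc • w with hGg
    have hGgrad : ∀ w, HasGradientAt G (Gg w) w := by
      intro w
      rw [hasGradientAt_iff_hasFDerivAt]
      have h1 := (hf w).hasFDerivAt
      have h2 : HasFDerivAt (fun w : H => μc / 2 * ‖w‖ ^ 2)
          ((μc / 2) • (2 • (innerSL ℝ w))) w :=
        ((hasStrictFDerivAt_norm_sq w).hasFDerivAt).const_smul (μc / 2)
      have := h1.sub h2
      have e : InnerProductSpace.toDual ℝ H (Gg w)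
          = InnerProductSpace.toDual ℝ H (Fg w) - (μc / 2) • (2 • (innerSL ℝ w)) := by
        ext u
        simp only [hGg, ContinuousLinearMap.sub_apply, ContinuousLinearMap.smul_apply,
          ContinuousLinearMap.smul_apply, InnerProductSpace.toDual_apply_apply, innerSL_apply_apply,
          inner_sub_left, real_inner_smul_left, smul_eq_mul]
        ring
      rw [e]
      exact this
    have hdiff : ∀ u w : H, Gg u - Gg w = (Fg u - Fg w) - μc • (u - w) := by
      intro u w
      rw [hGg]
      simp only [smul_sub]
      abel
    have hm' : ∀ u w, 0 ≤ ⟪Gg u - Gg w, u - w⟫ := by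
      intro u w
      rw [hdiff, inner_sub_left, real_inner_smul_left, real_inner_self_eq_norm_sq]
      have := hsc u w
      linarith
    have hub' : ∀ u w, ⟪Gg u - Gg w, u - w⟫ ≤ (L - μc) * ‖u - w‖ ^ 2 := by
      intro u w
      rw [hdiff, inner_sub_left, real_inner_smul_left, real_inner_self_eq_norm_sq]
      have hcs : ⟪Fg u - Fg w, u - w⟫ ≤ ‖Fg u - Fg w‖ * ‖u - w‖ := real_inner_le_norm _ _
      have hl := hlip u w
      nlinarith [norm_nonneg (u - w), norm_nonneg (Fg u - Fg w)]
    have hco := grad_cocoercive G Gg hGgrad hm' (L - μc) (by linarith) hub' x y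
    rw [hdiff, inner_sub_left, real_inner_smul_left, real_inner_self_eq_norm_sq] at hco
    have hexp : ‖(Fg x - Fg y) - μc • (x - y)‖ ^ 2
        = ‖Fg x - Fg y‖ ^ 2 - 2 * (μc * ⟪Fg x - Fg y, x - y⟫) + μc ^ 2 * ‖x - y‖ ^ 2 := by
      rw [norm_sub_sq_real, real_inner_smul_right, norm_smul, Real.norm_eq_abs,
        abs_of_pos hμc, mul_pow]
    rw [hexp] at hco
    nlinarith [hco]


lemma det_step (f : H → ℝ) (Fg : H → H) (hf : ∀ x, HasGradientAt f (Fg x) x)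
    (μc L : ℝ) (hμc : 0 < μc) (hμL : μc ≤ L)
    (hsc : ∀ x y : H, μc * ‖x - y‖ ^ 2 ≤ ⟪Fg x - Fg y, x - y⟫)
    (hlip : ∀ x y : H, ‖Fg x - Fg y‖ ≤ L * ‖x - y‖)
    (zstar : H) (hzstar : Fg zstar = 0)
    (α : ℝ) (hα0 : 0 < α) (hα2 : α * (μc + L) ≤ 2) (x : H) :
    ‖x - α • Fg x - zstar‖ ^ 2 ≤ ((1 - α * μc) * ‖x - zstar‖) ^ 2 := by
  have hkey := grad_interp f Fg hf μc L hμc hμL hsc hlip x zstar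
  rw [hzstar, sub_zero] at hkey
  have hid : x - α • Fg x - zstar = (x - zstar) - α • Fg x := by abel
  rw [hid, norm_sub_sq_real, real_inner_smul_right, norm_smul, Real.norm_eq_abs,
    abs_of_pos hα0, mul_pow]
  have hcomm : ⟪x - zstar, Fg x⟫ = ⟪Fg x, x - zstar⟫ := real_inner_comm _ _
  rw [hcomm]
  set r := ‖x - zstar‖ with hr
  set n := ‖Fg x‖ with hn
  set c := ⟪Fg x, x - zstar⟫ with hc
  have hr0 : 0 ≤ r := norm_nonneg _
  have hn0 : 0 ≤ n := norm_nonneg _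
  have hlow : μc * r ^ 2 ≤ c := by
    have := hsc x zstar
    rwa [hzstar, sub_zero] at this
  have hcs : c ≤ n * r := by
    rw [hc]
    calc ⟪Fg x, x - zstar⟫ ≤ ‖Fg x‖ * ‖x - zstar‖ := real_inner_le_norm _ _
      _ = n * r := rfl
  have hnlr : n ≤ L * r := by
    have := hlip x zstar
    rw [hzstar, sub_zero] at this
    exact this
  have hnmr : μc * r ≤ n := by
    rcases eq_or_lt_of_le hr0 with h0 | h0
    · rw [← h0]; simpa using hn0
    · have : μc * r * r ≤ n * r := by nlinarith
      exact le_of_mul_le_mul_right this h0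
  -- key: (μc + L) * c ≥ μc * L * r^2 + n^2
  have hS : 0 < μc + L := by linarith
  -- goal : r ^ 2 - 2 * (α * c) + α ^ 2 * n ^ 2 ≤ ((1 - α * μc) * r) ^ 2
  have hfact : 0 ≤ α * (2 - α * (μc + L)) * (n ^ 2 - (μc * r) ^ 2) := by
    apply mul_nonneg (mul_nonneg hα0.le (by linarith))
    nlinarith [hnmr, mul_nonneg hμc.le hr0]
  nlinarith [hkey, hfact, mul_le_mul_of_nonneg_left hkey (mul_nonneg hα0.le hα0.le)]

lemma exists_rat_aux (c b ε : ℝ) (hc : 0 ≤ c) (hb : 0 ≤ b) (hε : 0 < ε) :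
    ∃ q : ℚ, 0 < q ∧ (q : ℝ) * c ^ 2 + b ^ 2 / (q : ℝ) ≤ 2 * b * c + ε := by
  by_cases h0 : c = 0
  · obtain ⟨q, hq⟩ := exists_rat_gt (max 1 (b ^ 2 / ε))
    have hq1 : (1 : ℝ) < q := lt_of_le_of_lt (le_max_left _ _) hq
    have hq0' : (0 : ℝ) < q := by linarith
    have hq0 : 0 < q := by exact_mod_cast hq0'
    refine ⟨q, hq0, ?_⟩
    have hb2 : b ^ 2 < ε * q := by
      have h := lt_of_le_of_lt (le_max_right 1 (b ^ 2 / ε)) hq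
      calc b ^ 2 = ε * (b ^ 2 / ε) := by field_simp
        _ < ε * q := by exact mul_lt_mul_of_pos_left h hε
    have : b ^ 2 / (q : ℝ) ≤ ε := by
      rw [div_le_iff₀ hq0']
      nlinarith
    have heq : (q : ℝ) * c ^ 2 + b ^ 2 / q = b ^ 2 / q := by rw [h0]; ring
    rw [heq]
    nlinarith [this]
  · have hc' : 0 < c := lt_of_le_of_ne hc (Ne.symm h0)
    set δ := ε / (2 * c ^ 2) with hδ
    have hδ0 : 0 < δ := by positivity
    obtain ⟨q, hq1, hq2⟩ := exists_rat_btwn (show b / c + δ / 2 < b / c + δ by linarith)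
    have hbc0 : 0 ≤ b / c := by positivity
    have hq0' : (0 : ℝ) < q := lt_of_lt_of_le (by linarith) (le_of_lt hq1)
    have hq0 : 0 < q := by exact_mod_cast hq0'
    refine ⟨q, hq0, ?_⟩
    have hform : (q : ℝ) * c ^ 2 + b ^ 2 / q = ((q : ℝ) ^ 2 * c ^ 2 + b ^ 2) / q := by
      field_simp
    rw [hform, div_le_iff₀ hq0']
    -- (q c - b)^2 ≤ ε q
    have e0 : 0 ≤ (q : ℝ) * c - b := by
      have : b / c * c = b := div_mul_cancel₀ b (ne_of_gt hc')
      nlinarith [mul_lt_mul_of_pos_right hq1 hc']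
    have e1 : (q : ℝ) * c - b ≤ c * δ := by
      have : b / c * c = b := div_mul_cancel₀ b (ne_of_gt hc')
      nlinarith [mul_lt_mul_of_pos_right hq2 hc']
    have e2 : ((q : ℝ) * c - b) ^ 2 ≤ (c * δ) ^ 2 := by nlinarith
    have e3 : (c * δ) ^ 2 = ε / 2 * δ := by
      rw [hδ]
      field_simp
    have e4 : ε / 2 * δ ≤ ε * q := by
      have hqδ : δ / 2 ≤ (q : ℝ) := by linarith
      nlinarith
    nlinarith [e2, e3, e4]

lemma inf_aux (X c b α : ℝ) (hα : 0 < α) (hc : 0 ≤ c) (hb : 0 ≤ b)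
    (h : ∀ q : ℚ, 0 < q → X ≤ (1 + α * (q : ℝ)) * c ^ 2 + (α / (q : ℝ) + α ^ 2) * b ^ 2) :
    X ≤ (c + α * b) ^ 2 := by
  apply le_of_forall_sub_le
  intro ε hε
  rw [sub_le_iff_le_add]
  obtain ⟨q, hq, hqle⟩ := exists_rat_aux c b (ε / α) hc hb (by positivity)
  have hq' : (0 : ℝ) < q := by exact_mod_cast hq
  have h1 := h q hq
  have h2 : (1 + α * (q : ℝ)) * c ^ 2 + (α / (q : ℝ) + α ^ 2) * b ^ 2
      = c ^ 2 + α ^ 2 * b ^ 2 + α * ((q : ℝ) * c ^ 2 + b ^ 2 / (q : ℝ)) := by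
    field_simp
    ring
  have h3 := mul_le_mul_of_nonneg_left hqle hα.le
  have h4 : α * (2 * b * c + ε / α) = 2 * α * b * c + ε := by
    field_simp
  nlinarith [h1, h2, h3, h4]

end AuxLemmas

set_option maxHeartbeats 1000000 in
/-- One-step contraction estimate for the inexact (sampled) gradient step under the
conditional norm-test condition. -/
theorem one_step_contraction
    {H : Type*} [NormedAddCommGroup H] [InnerProductSpace ℝ H] [CompleteSpace H]
    [MeasurableSpace H] [BorelSpace H]
    (F : H → ℝ) (Fgrad : H → H) (hF : ∀ x, HasGradientAt F (Fgrad x) x)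
    (μc L : ℝ) (hμc : 0 < μc) (hμL : μc ≤ L)
    (hsc : ∀ x y : H, μc * ‖x - y‖ ^ 2 ≤ ⟪Fgrad x - Fgrad y, x - y⟫)
    (hlip : ∀ x y : H, ‖Fgrad x - Fgrad y‖ ≤ L * ‖x - y‖)
    (zstar : H) (hzstar : Fgrad zstar = 0)
    {Ω : Type*} {m0 : MeasurableSpace Ω} (P : Measure Ω) [IsProbabilityMeasure P]
    (𝒢 : MeasurableSpace Ω) (h𝒢 : 𝒢 ≤ m0)
    (z g : Ω → H) (hz : StronglyMeasurable[𝒢] z)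
    (hz2 : MemLp z 2 P) (hg2 : MemLp g 2 P)
    (θ : ℝ) (hθ : 0 ≤ θ)
    (hnorm : ∀ᵐ ω ∂P,
      (P[fun ω' => ‖g ω' - Fgrad (z ω')‖ ^ 2|𝒢]) ω ≤ θ ^ 2 * ‖Fgrad (z ω)‖ ^ 2)
    (α : ℝ) (hα : α ∈ Set.Ioc (0 : ℝ) (2 / (μc + L))) :
    ∀ᵐ ω ∂P,
      (P[fun ω' => ‖z ω' - α • g ω' - zstar‖ ^ 2|𝒢]) ω ≤
        (1 - α * μc + α * θ * L) ^ 2 * ‖z ω - zstar‖ ^ 2 := by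
  obtain ⟨hα0, hα2'⟩ := hα
  have hS : 0 < μc + L := by linarith
  have hα2 : α * (μc + L) ≤ 2 := by
    rw [← le_div_iff₀ hS]
    exact hα2'
  have h1αμ : 0 ≤ 1 - α * μc := by nlinarith
  have hL0 : 0 ≤ L := le_trans hμc.le hμL
  -- Lipschitz continuity of Fgrad
  have hcont : Continuous Fgrad := by
    have hlw : LipschitzWith (Real.toNNReal L) Fgrad := by
      apply LipschitzWith.of_dist_le_mul
      intro x y
      rw [dist_eq_norm, dist_eq_norm, Real.coe_toNNReal L hL0]
      exact hlip x y
    exact hlw.continuous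
  set Fz : Ω → H := fun ω => Fgrad (z ω) with hFzdef
  have hFz_meas : StronglyMeasurable[𝒢] Fz := hcont.comp_stronglyMeasurable hz
  have hFz_aesm : AEStronglyMeasurable[m0] Fz P := hcont.comp_aestronglyMeasurable hz2.1
  have hzz2 : MemLp (fun ω => z ω - zstar) 2 P := hz2.sub (memLp_const zstar)
  have hFz2 : MemLp Fz 2 P := by
    apply hzz2.of_le_mul hFz_aesm
    apply ae_of_all
    intro ω
    have := hlip (z ω) zstar
    rw [hzstar, sub_zero] at this
    simpa using this
  set d : Ω → H := fun ω => z ω - α • Fz ω - zstar with hddef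
  set e : Ω → H := fun ω => g ω - Fz ω with hedef
  have hd_meas : StronglyMeasurable[𝒢] d :=
    (hz.sub (hFz_meas.const_smul α)).sub stronglyMeasurable_const
  have hd2 : MemLp d 2 P := (hz2.sub (hFz2.const_smul α)).sub (memLp_const zstar)
  have he2 : MemLp e 2 P := hg2.sub hFz2
  have hp2 : MemLp (fun ω => z ω - α • g ω - zstar) 2 P :=
    (hz2.sub (hg2.const_smul α)).sub (memLp_const zstar)
  have intP : Integrable (fun ω => ‖z ω - α • g ω - zstar‖ ^ 2) P :=
    (memLp_two_iff_integrable_sq_norm hp2.1).mp hp2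
  have intD : Integrable (fun ω => ‖d ω‖ ^ 2) P :=
    (memLp_two_iff_integrable_sq_norm hd2.1).mp hd2
  have intE : Integrable (fun ω => ‖e ω‖ ^ 2) P :=
    (memLp_two_iff_integrable_sq_norm he2.1).mp he2
  have hd_sq_meas : StronglyMeasurable[𝒢] (fun ω => ‖d ω‖ ^ 2) := by
    have h1 := hd_meas.norm
    have h2 := h1.mul h1
    simp only [pow_two]
    exact h2
  haveI : SigmaFinite (P.trim h𝒢) := by
    have : IsFiniteMeasure (P.trim h𝒢) := isFiniteMeasure_trim h𝒢
    infer_instance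
  have hcondD : P[(fun ω => ‖d ω‖ ^ 2)|𝒢] = fun ω => ‖d ω‖ ^ 2 :=
    condExp_of_stronglyMeasurable h𝒢 hd_sq_meas intD
  -- per-q bound
  have key : ∀ q : ℚ, 0 < q → ∀ᵐ ω ∂P,
      (P[fun ω' => ‖z ω' - α • g ω' - zstar‖ ^ 2|𝒢]) ω ≤
        (1 + α * q) * ‖d ω‖ ^ 2 + (α / q + α ^ 2) * (θ ^ 2 * ‖Fz ω‖ ^ 2) := by
    intro q hq
    have hq' : (0 : ℝ) < q := by exact_mod_cast hq
    have hpt : ∀ ω, ‖z ω - α • g ω - zstar‖ ^ 2 ≤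
        (1 + α * q) * ‖d ω‖ ^ 2 + (α / q + α ^ 2) * ‖e ω‖ ^ 2 := by
      intro ω
      have hid : z ω - α • g ω - zstar = d ω - α • e ω := by
        simp only [hddef, hedef, smul_sub]
        abel
      rw [hid]
      have h1 : ‖d ω - α • e ω‖ ≤ ‖d ω‖ + α * ‖e ω‖ := by
        calc ‖d ω - α • e ω‖ ≤ ‖d ω‖ + ‖α • e ω‖ := norm_sub_le _ _
          _ = ‖d ω‖ + α * ‖e ω‖ := by
            rw [norm_smul, Real.norm_eq_abs, abs_of_pos hα0]
      have h1sq : ‖d ω - α • e ω‖ ^ 2 ≤ (‖d ω‖ + α * ‖e ω‖) ^ 2 :=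
        pow_le_pow_left₀ (norm_nonneg _) h1 2
      have h2 : 2 * (‖d ω‖ * ‖e ω‖) ≤ q * ‖d ω‖ ^ 2 + ‖e ω‖ ^ 2 / q := by
        have heq : (q : ℝ) * ‖d ω‖ ^ 2 + ‖e ω‖ ^ 2 / q - 2 * (‖d ω‖ * ‖e ω‖)
            = ((q : ℝ) * ‖d ω‖ - ‖e ω‖) ^ 2 / q := by
          field_simp
          ring
        have hnn : 0 ≤ ((q : ℝ) * ‖d ω‖ - ‖e ω‖) ^ 2 / q :=
          div_nonneg (sq_nonneg _) hq'.le
        linarith [heq ▸ hnn]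
      have h3 : α * (‖e ω‖ ^ 2 / q) = α / q * ‖e ω‖ ^ 2 := by ring
      nlinarith [h1sq, mul_le_mul_of_nonneg_left h2 hα0.le, sq_nonneg (‖e ω‖), hα0.le]
    have intR : Integrable
        (fun ω => (1 + α * q) * ‖d ω‖ ^ 2 + (α / q + α ^ 2) * ‖e ω‖ ^ 2) P :=
      (intD.const_mul _).add (intE.const_mul _)
    have hmono := condExp_mono (m := 𝒢) intP intR (ae_of_all _ hpt)
    -- compute condexp of RHS
    have hsmulD : P[((1 + α * q : ℝ) • fun ω => ‖d ω‖ ^ 2)|𝒢]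
        =ᵐ[P] (1 + α * q : ℝ) • P[(fun ω => ‖d ω‖ ^ 2)|𝒢] := condExp_smul _ _ _
    have hsmulE : P[((α / q + α ^ 2 : ℝ) • fun ω => ‖e ω‖ ^ 2)|𝒢]
        =ᵐ[P] (α / q + α ^ 2 : ℝ) • P[(fun ω => ‖e ω‖ ^ 2)|𝒢] := condExp_smul _ _ _
    have hadd := condExp_add (m := 𝒢) (μ := P) (intD.const_mul (1 + α * q))
      (intE.const_mul (α / q + α ^ 2))
    filter_upwards [hmono, hsmulD, hsmulE, hadd, hnorm] with ω hω hD hE hA hN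
    have hfun : (fun ω => (1 + α * q) * ‖d ω‖ ^ 2 + (α / q + α ^ 2) * ‖e ω‖ ^ 2)
        = (fun ω => (1 + α * q) * ‖d ω‖ ^ 2) + (fun ω => (α / q + α ^ 2) * ‖e ω‖ ^ 2) := rfl
    rw [hfun] at hω
    have hA' : (P[((fun ω => (1 + α * q) * ‖d ω‖ ^ 2) +
        fun ω => (α / q + α ^ 2) * ‖e ω‖ ^ 2)|𝒢]) ω
        = (P[(fun ω => (1 + α * q) * ‖d ω‖ ^ 2)|𝒢]) ω
          + (P[(fun ω => (α / q + α ^ 2) * ‖e ω‖ ^ 2)|𝒢]) ω := hA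
    have hsm1 : (fun ω => (1 + α * q) * ‖d ω‖ ^ 2)
        = ((1 + α * q : ℝ) • fun ω => ‖d ω‖ ^ 2) := rfl
    have hsm2 : (fun ω => (α / q + α ^ 2) * ‖e ω‖ ^ 2)
        = ((α / q + α ^ 2 : ℝ) • fun ω => ‖e ω‖ ^ 2) := rfl
    have hDval : (P[(fun ω => (1 + α * q) * ‖d ω‖ ^ 2)|𝒢]) ω
        = (1 + α * q) * ‖d ω‖ ^ 2 := by
      rw [hsm1, hD]
      simp only [Pi.smul_apply, smul_eq_mul, hcondD]
    have hEval : (P[(fun ω => (α / q + α ^ 2) * ‖e ω‖ ^ 2)|𝒢]) ω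
        = (α / q + α ^ 2) * (P[(fun ω => ‖e ω‖ ^ 2)|𝒢]) ω := by
      rw [hsm2, hE]
      simp only [Pi.smul_apply, smul_eq_mul]
    have hcoef : 0 ≤ α / q + α ^ 2 := by positivity
    have hNe : (P[(fun ω' => ‖e ω'‖ ^ 2)|𝒢]) ω ≤ θ ^ 2 * ‖Fz ω‖ ^ 2 := hN
    calc (P[fun ω' => ‖z ω' - α • g ω' - zstar‖ ^ 2|𝒢]) ω
        ≤ (P[((fun ω => (1 + α * q) * ‖d ω‖ ^ 2) +
            fun ω => (α / q + α ^ 2) * ‖e ω‖ ^ 2)|𝒢]) ω := hω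
      _ = (1 + α * q) * ‖d ω‖ ^ 2
          + (α / q + α ^ 2) * (P[(fun ω => ‖e ω‖ ^ 2)|𝒢]) ω := by
          rw [hA', hDval, hEval]
      _ ≤ (1 + α * q) * ‖d ω‖ ^ 2 + (α / q + α ^ 2) * (θ ^ 2 * ‖Fz ω‖ ^ 2) := by
          have := mul_le_mul_of_nonneg_left hNe hcoef
          linarith
  have keyall : ∀ᵐ ω ∂P, ∀ q : ℚ, 0 < q →
      (P[fun ω' => ‖z ω' - α • g ω' - zstar‖ ^ 2|𝒢]) ω ≤
        (1 + α * q) * ‖d ω‖ ^ 2 + (α / q + α ^ 2) * (θ ^ 2 * ‖Fz ω‖ ^ 2) := by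
    rw [ae_all_iff]
    intro q
    by_cases hq : 0 < q
    · filter_upwards [key q hq] with ω hω _
      exact hω
    · filter_upwards with ω hq'
      exact absurd hq' hq
  filter_upwards [keyall] with ω hω
  set r := ‖z ω - zstar‖ with hr
  have hr0 : 0 ≤ r := norm_nonneg _
  set c := (1 - α * μc) * r with hcdef
  set b := θ * (L * r) with hbdef
  have hc0 : 0 ≤ c := mul_nonneg h1αμ hr0
  have hb0 : 0 ≤ b := mul_nonneg hθ (mul_nonneg hL0 hr0)
  have hgoal : (P[fun ω' => ‖z ω' - α • g ω' - zstar‖ ^ 2|𝒢]) ω ≤ (c + α * b) ^ 2 := by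
    apply inf_aux _ c b α hα0 hc0 hb0
    intro q hq
    have hq' : (0 : ℝ) < q := by exact_mod_cast hq
    have hdet := det_step F Fgrad hF μc L hμc hμL hsc hlip zstar hzstar α hα0 hα2 (z ω)
    have hdb : ‖d ω‖ ^ 2 ≤ c ^ 2 := by
      rw [hcdef, hr]
      exact hdet
    have hFzb : θ ^ 2 * ‖Fz ω‖ ^ 2 ≤ b ^ 2 := by
      have h1 : ‖Fz ω‖ ≤ L * r := by
        have := hlip (z ω) zstar
        rw [hzstar, sub_zero] at this
        exact this
      have h2 : ‖Fz ω‖ ^ 2 ≤ (L * r) ^ 2 := pow_le_pow_left₀ (norm_nonneg _) h1 2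
      rw [hbdef, mul_pow]
      nlinarith [sq_nonneg θ]
    have hco1 : (0:ℝ) ≤ 1 + α * q := by positivity
    have hco2 : (0:ℝ) ≤ α / q + α ^ 2 := by positivity
    calc (P[fun ω' => ‖z ω' - α • g ω' - zstar‖ ^ 2|𝒢]) ω
        ≤ (1 + α * q) * ‖d ω‖ ^ 2 + (α / q + α ^ 2) * (θ ^ 2 * ‖Fz ω‖ ^ 2) := hω q hq
      _ ≤ (1 + α * q) * c ^ 2 + (α / q + α ^ 2) * b ^ 2 := by
          have := mul_le_mul_of_nonneg_left hdb hco1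
          have := mul_le_mul_of_nonneg_left hFzb hco2
          linarith [mul_le_mul_of_nonneg_left hdb hco1, mul_le_mul_of_nonneg_left hFzb hco2]
  calc (P[fun ω' => ‖z ω' - α • g ω' - zstar‖ ^ 2|𝒢]) ω
      ≤ (c + α * b) ^ 2 := hgoal
    _ = (1 - α * μc + α * θ * L) ^ 2 * r ^ 2 := by
        rw [hcdef, hbdef]
        ring
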